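/- Let f ∈ C³([0,1)) satisfy f ≥ 0, f‴ ≥ 0, and lim_{t→1⁻} f(t) = +∞. Then f′(t) → +∞ as t → 1⁻ (in particular f′ > 0 near 1) and liminf_{t→1⁻} f(t)f″(t)/f′(t)² ≥ 1/2. -/

import Mathlib

open MeasureTheory Set Filter Topology

/-- `f` is of class `C³([0,1))`, with derivatives `f'`, `f''`, `f'''`. -/
def C3On01 (f f' f'' f''' : ℝ → ℝ) : Prop :=
  (∀ t ∈ Ico (0:ℝ) 1, HasDerivWithinAt f (f' t) (Ico (0:ℝ) 1) t) ∧
  (∀ t ∈ Ico (0:ℝ) 1, HasDerivWithinAt f' (f'' t) (Ico (0:ℝ) 1) t) ∧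
  (∀ t ∈ Ico (0:ℝ) 1, HasDerivWithinAt f'' (f''' t) (Ico (0:ℝ) 1) t) ∧
  ContinuousOn f''' (Ico (0:ℝ) 1)

/-- If `f ∈ C³([0,1))` satisfies `f ≥ 0`, `f''' ≥ 0` and `f(t) → +∞` as
`t → 1⁻`, then `f'(t) → +∞` as `t → 1⁻` (in particular `f' > 0` near `1`) and
`liminf_{t→1⁻} f f''/f'² ≥ 1/2` (in `EReal`). -/
theorem stmt15 (f f' f'' f''' : ℝ → ℝ)
    (hC3 : C3On01 f f' f'' f''')
    (hf0 : ∀ t ∈ Ico (0:ℝ) 1, 0 ≤ f t)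
    (hf'''0 : ∀ t ∈ Ico (0:ℝ) 1, 0 ≤ f''' t)
    (hblow : Tendsto f (𝓝[<] (1:ℝ)) atTop) :
    Tendsto f' (𝓝[<] (1:ℝ)) atTop ∧
    (∀ᶠ t in 𝓝[<] (1:ℝ), 0 < f' t) ∧
    ((1/2 : ℝ) : EReal) ≤
      Filter.liminf (fun t => ((f t * f'' t / f' t ^ 2 : ℝ) : EReal)) (𝓝[<] (1:ℝ)) := by
  obtain ⟨hd1, hd2, hd3, hc3⟩ := hC3
  have hIconv : Convex ℝ (Ico (0:ℝ) 1) := convex_Ico 0 1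
  have hIint : interior (Ico (0:ℝ) 1) = Ioo (0:ℝ) 1 := interior_Ico
  have hIooI : Ioo (0:ℝ) 1 ⊆ Ico (0:ℝ) 1 := Ioo_subset_Ico_self
  have hcf : ContinuousOn f (Ico (0:ℝ) 1) := fun t ht => (hd1 t ht).continuousWithinAt
  have hcf' : ContinuousOn f' (Ico (0:ℝ) 1) := fun t ht => (hd2 t ht).continuousWithinAt
  have hcf'' : ContinuousOn f'' (Ico (0:ℝ) 1) := fun t ht => (hd3 t ht).continuousWithinAt
  have h0I : (0:ℝ) ∈ Ico (0:ℝ) 1 := ⟨le_refl 0, one_pos⟩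
  -- f'' is monotone on [0,1)
  have hmono2 : MonotoneOn f'' (Ico (0:ℝ) 1) := by
    apply monotoneOn_of_hasDerivWithinAt_nonneg hIconv hcf'' (f' := f''')
    · intro x hx
      rw [hIint] at hx ⊢
      exact ((hd3 x (hIooI hx)).mono hIooI)
    · intro x hx
      rw [hIint] at hx
      exact hf'''0 x (hIooI hx)
  -- g := f'' f - f'²/2 is monotone on [0,1)
  have hg : MonotoneOn (fun t => f'' t * f t - f' t ^ 2 / 2) (Ico (0:ℝ) 1) := by
    apply monotoneOn_of_hasDerivWithinAt_nonneg hIconv (f' := fun t => f''' t * f t)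
    · exact (hcf''.mul hcf).sub ((hcf'.pow 2).div_const 2)
    · intro x hx
      rw [hIint] at hx ⊢
      have h1 : HasDerivWithinAt f (f' x) (Ioo (0:ℝ) 1) x := (hd1 x (hIooI hx)).mono hIooI
      have h2 : HasDerivWithinAt f' (f'' x) (Ioo (0:ℝ) 1) x := (hd2 x (hIooI hx)).mono hIooI
      have h3 : HasDerivWithinAt f'' (f''' x) (Ioo (0:ℝ) 1) x := (hd3 x (hIooI hx)).mono hIooI
      have := ((h3.mul h1).sub ((h2.pow 2).div_const 2))
      refine this.congr_deriv ?_
      push_cast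
      ring
    · intro x hx
      rw [hIint] at hx
      exact mul_nonneg (hf'''0 x (hIooI hx)) (hf0 x (hIooI hx))
  by_cases hex : ∃ t ∈ Ico (0:ℝ) 1, 0 ≤ f'' t
  · obtain ⟨t1, ht1I, ht1⟩ := hex
    have hsub : Ico t1 1 ⊆ Ico (0:ℝ) 1 := fun x hx => ⟨le_trans ht1I.1 hx.1, hx.2⟩
    -- f' is monotone on [t1,1)
    have hmono1 : MonotoneOn f' (Ico t1 1) := by
      apply monotoneOn_of_hasDerivWithinAt_nonneg (convex_Ico t1 1) (hcf'.mono hsub)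
        (f' := f'')
      · intro x hx
        rw [interior_Ico] at hx ⊢
        have hxI : x ∈ Ico (0:ℝ) 1 := hsub ⟨le_of_lt hx.1, hx.2⟩
        exact (hd2 x hxI).mono (fun y hy => hsub ⟨le_of_lt hy.1, hy.2⟩)
      · intro x hx
        rw [interior_Ico] at hx
        have hxI : x ∈ Ico (0:ℝ) 1 := hsub ⟨le_of_lt hx.1, hx.2⟩
        exact le_trans ht1 (hmono2 ht1I hxI (le_of_lt hx.1))
    -- f' → ∞
    have hf'top : Tendsto f' (𝓝[<] (1:ℝ)) atTop := by
      rw [tendsto_atTop]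
      intro M
      have hev1 : ∀ᶠ t in 𝓝[<] (1:ℝ), f t1 + max M 0 ≤ f t :=
        hblow.eventually (eventually_ge_atTop _)
      have hev2 : Ioo t1 1 ∈ 𝓝[<] (1:ℝ) := Ioo_mem_nhdsLT_of_mem ⟨ht1I.2, le_refl 1⟩
      filter_upwards [hev1, hev2] with t hft ht
      have htI : t ∈ Ico (0:ℝ) 1 := hsub ⟨le_of_lt ht.1, ht.2⟩
      have hcont : ContinuousOn f (Icc t1 t) :=
        hcf.mono (fun x hx => ⟨le_trans ht1I.1 hx.1, lt_of_le_of_lt hx.2 htI.2⟩)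
      have hderiv : ∀ x ∈ Ioo t1 t, HasDerivAt f (f' x) x := by
        intro x hx
        have hxI : x ∈ Ioo (0:ℝ) 1 := ⟨lt_of_le_of_lt ht1I.1 hx.1, lt_trans hx.2 htI.2⟩
        exact (hd1 x (hIooI hxI)).hasDerivAt
          (mem_of_superset (Ioo_mem_nhds hxI.1 hxI.2) hIooI)
      obtain ⟨c, hc, hceq⟩ := exists_hasDerivAt_eq_slope f f' ht.1 hcont hderiv
      have hc1 : c ∈ Ico t1 1 := ⟨le_of_lt hc.1, lt_trans hc.2 htI.2⟩
      have h1 : f' c ≤ f' t := hmono1 hc1 ⟨le_of_lt ht.1, ht.2⟩ (le_of_lt hc.2)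
      have hdpos : 0 < t - t1 := sub_pos.mpr ht.1
      have hdle : t - t1 ≤ 1 := by
        have h2 := htI.2; have h3 := ht1I.1; linarith
      have hMc : max M 0 ≤ f' c := by
        rw [hceq, le_div_iff₀ hdpos]
        calc max M 0 * (t - t1) ≤ max M 0 * 1 :=
              mul_le_mul_of_nonneg_left hdle (le_max_right M 0)
          _ = max M 0 := mul_one _
          _ ≤ f t - f t1 := by linarith
      exact le_trans (le_trans (le_max_left M 0) hMc) h1
    refine ⟨hf'top, hf'top.eventually_gt_atTop 0, ?_⟩
    -- liminf bound
    by_contra hlt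
    push_neg at hlt
    obtain ⟨r, hr1, hr2⟩ := EReal.exists_between_coe_real hlt
    have hrr : (r : ℝ) < 1/2 := by exact_mod_cast hr2
    set g0 : ℝ := f'' 0 * f 0 - f' 0 ^ 2 / 2 with hg0def
    set ε : ℝ := 1/2 - r with hεdef
    have hεpos : 0 < ε := by simp only [hεdef]; linarith
    have hev : ∀ᶠ t in 𝓝[<] (1:ℝ),
        (r : EReal) ≤ ((f t * f'' t / f' t ^ 2 : ℝ) : EReal) := by
      have hev1 : ∀ᶠ t in 𝓝[<] (1:ℝ), max 1 (|g0| / ε) ≤ f' t :=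
        hf'top.eventually (eventually_ge_atTop _)
      have hev2 : Ioo (0:ℝ) 1 ∈ 𝓝[<] (1:ℝ) := Ioo_mem_nhdsLT_of_mem ⟨one_pos, le_refl 1⟩
      filter_upwards [hev1, hev2] with t hf't ht
      have htI : t ∈ Ico (0:ℝ) 1 := hIooI ht
      have h1 : (1:ℝ) ≤ f' t := le_trans (le_max_left _ _) hf't
      have hpos : 0 < f' t ^ 2 := pow_pos (by linarith) 2
      have hsq : |g0| / ε ≤ f' t ^ 2 :=
        le_trans (le_trans (le_max_right _ _) hf't) (by nlinarith)
      have hgabs : |g0| ≤ ε * f' t ^ 2 := by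
        rw [div_le_iff₀ hεpos] at hsq; linarith
      have hkey : g0 + f' t ^ 2 / 2 ≤ f t * f'' t := by
        have := hg h0I htI htI.1
        simp only [hg0def] at *
        linarith [this]
      have hfin : (r : ℝ) ≤ f t * f'' t / f' t ^ 2 := by
        have h3 : (g0 + f' t ^ 2 / 2) / f' t ^ 2 ≤ f t * f'' t / f' t ^ 2 := by
          gcongr
        have h4 : (g0 + f' t ^ 2 / 2) / f' t ^ 2 = g0 / f' t ^ 2 + 1/2 := by
          rw [add_div, div_right_comm, div_self (ne_of_gt hpos)]
        have h5 : -ε ≤ g0 / f' t ^ 2 := by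
          rw [le_div_iff₀ hpos]
          nlinarith [neg_abs_le g0]
        rw [h4] at h3
        simp only [hεdef] at h5
        linarith
      exact_mod_cast EReal.coe_le_coe_iff.mpr hfin
    have hle : (r : EReal) ≤
        Filter.liminf (fun t => ((f t * f'' t / f' t ^ 2 : ℝ) : EReal)) (𝓝[<] (1:ℝ)) :=
      le_liminf_of_le (by isBoundedDefault) hev
    exact absurd hle (not_le.mpr hr1)
  · exfalso
    push_neg at hex
    have hanti : AntitoneOn f' (Ico (0:ℝ) 1) := by
      apply antitoneOn_of_hasDerivWithinAt_nonpos hIconv hcf' (f' := f'')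
      · intro x hx
        rw [hIint] at hx ⊢
        exact (hd2 x (hIooI hx)).mono hIooI
      · intro x hx
        rw [hIint] at hx
        exact le_of_lt (hex x (hIooI hx))
    have hbound : MonotoneOn (fun t => f' 0 * t - f t) (Ico (0:ℝ) 1) := by
      apply monotoneOn_of_hasDerivWithinAt_nonneg hIconv (f' := fun t => f' 0 - f' t)
      · exact (continuousOn_const.mul continuousOn_id).sub hcf
      · intro x hx
        rw [hIint] at hx ⊢
        have := ((hasDerivWithinAt_id x (Ioo (0:ℝ) 1)).const_mul (f' 0)).sub
          ((hd1 x (hIooI hx)).mono hIooI)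
        refine this.congr_deriv ?_
        ring
      · intro x hx
        rw [hIint] at hx
        have := hanti h0I (hIooI hx) (le_of_lt hx.1)
        linarith
    have hev2 : ∀ᶠ t in 𝓝[<] (1:ℝ), t ∈ Ioo (0:ℝ) 1 :=
      eventually_iff.mpr (by exact Ioo_mem_nhdsLT_of_mem (⟨one_pos, le_refl 1⟩ : (1:ℝ) ∈ Ioc (0:ℝ) 1))
    obtain ⟨t, hft, ht⟩ :=
      ((hblow.eventually (eventually_gt_atTop (f 0 + |f' 0|))).and hev2).exists
    have htI : t ∈ Ico (0:ℝ) 1 := hIooI ht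
    have hb := hbound h0I htI htI.1
    simp only [mul_zero, zero_sub] at hb
    have habs : f' 0 * t ≤ |f' 0| := by
      nlinarith [le_abs_self (f' 0), neg_abs_le (f' 0), abs_nonneg (f' 0), htI.1,
        le_of_lt htI.2]
    linarith
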